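/- Let $\{a_n\},\{b_n\},\{c_n\},\{d_n\}$ be real sequences with $1\le a_n\le b_n$ for all $n$ and $\psi:\mathbb{N}\to[0,\infty)$. If $\sum_{n\in\mathbb{N}}\psi(n)\log\frac{1}{\psi(n)}<\infty$, then the two-dimensional Lebesgue measure of $M_2(\psi)=\{(x,y)\in[0,1]^2:\|a_nx+c_n\|\cdot\|b_ny+d_n\|<\psi(n)\text{ for infinitely many }n\}$ is zero. -/

import Mathlib

open Set MeasureTheory
open scoped ENNReal NNReal

/-- Distance from `x` to the nearest integer. -/
noncomputable def nint (x : ℝ) : ℝ := |x - round x|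

/-- `log` with the convention that `log x = 1` for `x ≤ e`. -/
noncomputable def clog (x : ℝ) : ℝ := max 1 (Real.log x)

lemma nint_nonneg (x : ℝ) : 0 ≤ nint x := abs_nonneg _

lemma nint_le_half (x : ℝ) : nint x ≤ 1/2 := abs_sub_round x

lemma one_le_clog (x : ℝ) : 1 ≤ clog x := le_max_left _ _

/-- Measure of points of `[0,1]` where `‖αx+γ‖ < δ`, for `α ≥ 1`. -/
lemma lemA (α γ δ : ℝ) (hα : 1 ≤ α) :
    volume {x | x ∈ Icc (0:ℝ) 1 ∧ nint (α * x + γ) < δ} ≤ ENNReal.ofReal (6 * δ) := by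
  have hα0 : (0:ℝ) < α := lt_of_lt_of_le one_pos hα
  rcases le_or_gt (1/2 : ℝ) δ with hδ | hδ
  · -- trivial: set ⊆ Icc 0 1, measure ≤ 1 ≤ 6δ
    calc volume {x | x ∈ Icc (0:ℝ) 1 ∧ nint (α * x + γ) < δ}
        ≤ volume (Icc (0:ℝ) 1) := measure_mono (fun x hx => hx.1)
      _ = 1 := by simp
      _ ≤ ENNReal.ofReal (6 * δ) := by
          rw [show (1:ℝ≥0∞) = ENNReal.ofReal 1 by simp]
          exact ENNReal.ofReal_le_ofReal (by linarith)
  rcases le_or_gt δ 0 with hδ0 | hδ0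
  · have : {x | x ∈ Icc (0:ℝ) 1 ∧ nint (α * x + γ) < δ} = ∅ := by
      ext x; simp only [mem_setOf_eq, mem_empty_iff_false, iff_false]
      rintro ⟨-, h⟩
      exact absurd h (not_lt.2 (le_trans hδ0 (nint_nonneg _)))
    rw [this, measure_empty]; exact zero_le
  -- main case 0 < δ < 1/2
  set A : ℤ := ⌈γ - δ⌉ with hA
  set B : ℤ := ⌊α + γ + δ⌋ with hB
  have hsub : {x | x ∈ Icc (0:ℝ) 1 ∧ nint (α * x + γ) < δ} ⊆
      ⋃ k ∈ Finset.Icc A B, Ioo (((k:ℝ) - δ - γ)/α) (((k:ℝ) + δ - γ)/α) := by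
    rintro x ⟨⟨hx0, hx1⟩, hn⟩
    set k : ℤ := round (α * x + γ) with hk
    have habs : |α * x + γ - (k:ℝ)| < δ := hn
    rw [abs_lt] at habs
    have hax0 : (0:ℝ) ≤ α * x := mul_nonneg hα0.le hx0
    have hax1 : α * x ≤ α := by nlinarith
    have hkA : A ≤ k := by
      rw [hA, Int.ceil_le]; push_cast; linarith [habs.2]
    have hkB : k ≤ B := by
      rw [hB, Int.le_floor]; push_cast; linarith [habs.1]
    refine mem_iUnion₂.2 ⟨k, Finset.mem_Icc.2 ⟨hkA, hkB⟩, ?_⟩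
    constructor
    · rw [div_lt_iff₀ hα0]; linarith [habs.1]
    · rw [lt_div_iff₀ hα0]; linarith [habs.2]
  calc volume {x | x ∈ Icc (0:ℝ) 1 ∧ nint (α * x + γ) < δ}
      ≤ ∑ k ∈ Finset.Icc A B, volume (Ioo (((k:ℝ) - δ - γ)/α) (((k:ℝ) + δ - γ)/α)) :=
        le_trans (measure_mono hsub) (measure_biUnion_finset_le _ _)
    _ = ∑ k ∈ Finset.Icc A B, ENNReal.ofReal (2 * δ / α) := by
        refine Finset.sum_congr rfl fun k _ => ?_
        rw [Real.volume_Ioo]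
        congr 1
        field_simp
        ring
    _ = ((Finset.Icc A B).card : ℝ≥0∞) * ENNReal.ofReal (2 * δ / α) := by
        rw [Finset.sum_const, nsmul_eq_mul]
    _ ≤ ENNReal.ofReal (6 * δ) := by
        rw [← ENNReal.ofReal_natCast, ← ENNReal.ofReal_mul (by positivity)]
        apply ENNReal.ofReal_le_ofReal
        have hcard : ((Finset.Icc A B).card : ℝ) ≤ 3 * α := by
          rw [Int.card_Icc]
          have h1 : ((B + 1 - A : ℤ) : ℝ) ≤ 3 * α := by
            push_cast
            have h2 : (B:ℝ) ≤ α + γ + δ := Int.floor_le _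
            have h3 : γ - δ ≤ (A:ℝ) := Int.le_ceil _
            linarith
          calc ((B + 1 - A).toNat : ℝ) = ((((B + 1 - A).toNat : ℤ)):ℝ) := by push_cast; ring
            _ = ((max (B + 1 - A) 0 : ℤ) : ℝ) := by rw [Int.toNat_eq_max]
            _ ≤ max ((B + 1 - A : ℤ):ℝ) 0 := by push_cast; simp
            _ ≤ 3 * α := max_le h1 (by positivity)
        calc ((Finset.Icc A B).card : ℝ) * (2 * δ / α) ≤ 3 * α * (2 * δ / α) := by
              apply mul_le_mul_of_nonneg_right hcard (by positivity)
          _ = 6 * δ := by field_simp; ring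

lemma lemB (α β γ δ p : ℝ) (hα : 1 ≤ α) (hβ : 1 ≤ β) (hp : 0 ≤ p) :
    volume {q : ℝ × ℝ | q.1 ∈ Icc (0:ℝ) 1 ∧ q.2 ∈ Icc (0:ℝ) 1 ∧
      nint (α * q.1 + γ) * nint (β * q.2 + δ) < p} ≤
      ENNReal.ofReal (400 * (p * clog (1 / p))) := by
  have hclog : 1 ≤ clog (1/p) := one_le_clog _
  rcases eq_or_lt_of_le hp with hp0 | hp0
  · -- p = 0 : empty set
    have : {q : ℝ × ℝ | q.1 ∈ Icc (0:ℝ) 1 ∧ q.2 ∈ Icc (0:ℝ) 1 ∧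
        nint (α * q.1 + γ) * nint (β * q.2 + δ) < p} = ∅ := by
      ext q
      simp only [mem_setOf_eq, mem_empty_iff_false, iff_false]
      rintro ⟨-, -, h⟩
      exact absurd h (not_lt.2 (hp0 ▸ mul_nonneg (nint_nonneg _) (nint_nonneg _)))
    rw [this, measure_empty]; exact zero_le
  rcases le_or_gt 1 p with hp1 | hp1
  · -- p ≥ 1 : trivial bound by 1
    calc volume {q : ℝ × ℝ | q.1 ∈ Icc (0:ℝ) 1 ∧ q.2 ∈ Icc (0:ℝ) 1 ∧
          nint (α * q.1 + γ) * nint (β * q.2 + δ) < p}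
        ≤ volume (Icc (0:ℝ) 1 ×ˢ Icc (0:ℝ) 1) :=
          measure_mono (fun q hq => ⟨hq.1, hq.2.1⟩)
      _ = 1 := by
          rw [Measure.volume_eq_prod, Measure.prod_prod]
          simp
      _ ≤ ENNReal.ofReal (400 * (p * clog (1/p))) := by
          rw [show (1:ℝ≥0∞) = ENNReal.ofReal 1 by simp]
          apply ENNReal.ofReal_le_ofReal
          nlinarith
  -- main case 0 < p < 1
  set J : ℕ := Nat.clog 2 ⌈1/p⌉₊ with hJ
  -- fact F1 : 2 ^ (-J) ≤ p, i.e. 1/p ≤ 2^J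
  have hF1 : 1/p ≤ (2:ℝ)^J := by
    calc (1/p : ℝ) ≤ (⌈1/p⌉₊ : ℝ) := Nat.le_ceil _
      _ ≤ ((2^J : ℕ) : ℝ) := by exact_mod_cast Nat.le_pow_clog one_lt_two _
      _ = (2:ℝ)^J := by push_cast; ring
  -- fact F2 : J + 1 ≤ 5 * clog (1/p)
  have hF2 : (J:ℝ) + 1 ≤ 5 * clog (1/p) := by
    rcases Nat.eq_zero_or_pos J with h0 | hJ1
    · rw [h0]; push_cast; linarith
    · have hm2 : 1 < ⌈1/p⌉₊ := by
        by_contra hm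
        push_neg at hm
        have : Nat.clog 2 ⌈1/p⌉₊ = 0 := Nat.clog_of_right_le_one hm _
        omega
      have hpred : (2:ℕ)^(J-1) < ⌈1/p⌉₊ := Nat.pow_pred_clog_lt_self one_lt_two hm2
      have h1p : (1:ℝ) < 1/p := by rw [lt_div_iff₀ hp0]; linarith
      have hceil : (⌈1/p⌉₊ : ℝ) < 1/p + 1 := Nat.ceil_lt_add_one (by positivity)
      have hr : (2:ℝ)^(J-1) < 2 * (1/p) := by
        calc (2:ℝ)^(J-1) = (((2:ℕ)^(J-1) : ℕ):ℝ) := by push_cast; ring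
          _ < (⌈1/p⌉₊ : ℝ) := by exact_mod_cast hpred
          _ < 1/p + 1 := hceil
          _ ≤ 2 * (1/p) := by linarith
      have hlog : ((J:ℝ) - 1) * Real.log 2 < Real.log 2 + Real.log (1/p) := by
        have h2 : Real.log ((2:ℝ)^(J-1)) < Real.log (2 * (1/p)) :=
          Real.log_lt_log (by positivity) hr
        rw [Real.log_pow, Real.log_mul (by norm_num) (by positivity)] at h2
        have hc : ((J - 1 : ℕ) : ℝ) = (J:ℝ) - 1 := by
          have : 1 ≤ J := hJ1
          push_cast [this]; ring
        rw [hc] at h2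
        exact h2
      have hl2 : (0.6931471803 : ℝ) < Real.log 2 := Real.log_two_gt_d9
      have hlp : 0 < Real.log (1/p) := Real.log_pos h1p
      have hcl : Real.log (1/p) ≤ clog (1/p) := le_max_right _ _
      -- (J-1) < 1 + log(1/p)/log 2 ≤ 1 + 2 log(1/p)
      have : (J:ℝ) - 1 < 1 + 2 * Real.log (1/p) := by
        nlinarith
      nlinarith
  -- the dyadic cover
  set X : ℕ → Set ℝ := fun j => {x | x ∈ Icc (0:ℝ) 1 ∧ nint (α * x + γ) < (2:ℝ)^(-(j:ℤ))}
    with hX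
  set Y : ℕ → Set ℝ := fun j => {y | y ∈ Icc (0:ℝ) 1 ∧ nint (β * y + δ) < p * 2^(j+1)}
    with hY
  set XL : Set ℝ := {x | x ∈ Icc (0:ℝ) 1 ∧ nint (α * x + γ) < (2:ℝ)^(-((J:ℤ)+1))} with hXL
  have hsub : {q : ℝ × ℝ | q.1 ∈ Icc (0:ℝ) 1 ∧ q.2 ∈ Icc (0:ℝ) 1 ∧
      nint (α * q.1 + γ) * nint (β * q.2 + δ) < p} ⊆
      (⋃ j ∈ Finset.range (J+1), X j ×ˢ Y j) ∪ XL ×ˢ (Icc (0:ℝ) 1) := by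
    rintro ⟨x, y⟩ ⟨hx, hy, hprod⟩
    set u := nint (α * x + γ) with hu
    set v := nint (β * y + δ) with hv
    have hu0 : 0 ≤ u := nint_nonneg _
    have hv0 : 0 ≤ v := nint_nonneg _
    have hu2 : u ≤ 1/2 := nint_le_half _
    rcases lt_or_ge u ((2:ℝ)^(-((J:ℤ)+1))) with hcase | hcase
    · exact Or.inr ⟨⟨hx, hcase⟩, hy⟩
    · have hupos : 0 < u := lt_of_lt_of_le (by positivity) hcase
      set e : ℤ := Int.log 2 u with he
      have he1 : (2:ℝ)^e ≤ u := Int.zpow_log_le_self one_lt_two hupos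
      have he2 : u < (2:ℝ)^(e+1) := by
        have := Int.lt_zpow_succ_log_self (b := 2) one_lt_two u
        simpa using this
      have heneg : e < 0 := by
        by_contra hge
        push_neg at hge
        have : (1:ℝ) ≤ (2:ℝ)^e := one_le_zpow₀ (by norm_num) hge
        linarith
      have hegeJ : -((J:ℤ)+1) < e + 1 := by
        have h2 : (2:ℝ)^(-((J:ℤ)+1)) < (2:ℝ)^(e+1) := lt_of_le_of_lt hcase he2
        exact (zpow_lt_zpow_iff_right₀ (by norm_num : (1:ℝ) < 2)).1 h2
      set j : ℕ := (-(e+1)).toNat with hj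
      have hjval : (j:ℤ) = -(e+1) := Int.toNat_of_nonneg (by omega)
      have hjJ : j ≤ J := by omega
      refine Or.inl (mem_iUnion₂.2 ⟨j, Finset.mem_range.2 (by omega), ?_, ?_⟩)
      · refine ⟨hx, ?_⟩
        show u < (2:ℝ)^(-(j:ℤ))
        rw [hjval]
        simpa using he2
      · refine ⟨hy, ?_⟩
        show v < p * 2^(j+1)
        have hul : (2:ℝ)^(-((j:ℤ)+1)) ≤ u := by
          have : -((j:ℤ)+1) = e := by omega
          rw [this]; exact he1
        have hpow : (0:ℝ) < (2:ℝ)^((j:ℕ)+1) := by positivity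
        have key : v * (2:ℝ)^(-((j:ℤ)+1)) < p := by
          calc v * (2:ℝ)^(-((j:ℤ)+1)) ≤ v * u := by
                exact mul_le_mul_of_nonneg_left hul hv0
            _ = u * v := mul_comm _ _
            _ < p := hprod
        have hz : (2:ℝ)^(-((j:ℤ)+1)) * (2:ℝ)^((j:ℕ)+1) = 1 := by
          rw [← zpow_natCast (2:ℝ) (j+1), ← zpow_add₀ (by norm_num : (2:ℝ) ≠ 0)]
          have hexp : -((j:ℤ)+1) + ((j+1:ℕ):ℤ) = 0 := by push_cast; ring
          rw [hexp, zpow_zero]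
        calc v = v * ((2:ℝ)^(-((j:ℤ)+1)) * (2:ℝ)^((j:ℕ)+1)) := by rw [hz]; ring
          _ = (v * (2:ℝ)^(-((j:ℤ)+1))) * (2:ℝ)^((j:ℕ)+1) := by ring
          _ < p * (2:ℝ)^((j:ℕ)+1) := by
              exact mul_lt_mul_of_pos_right key hpow
  -- measure computation
  have hXj : ∀ j : ℕ, volume (X j ×ˢ Y j) ≤ ENNReal.ofReal (72 * p) := by
    intro j
    rw [Measure.volume_eq_prod, Measure.prod_prod]
    have h1 : volume (X j) ≤ ENNReal.ofReal (6 * (2:ℝ)^(-(j:ℤ))) := lemA α γ _ hα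
    have h2 : volume (Y j) ≤ ENNReal.ofReal (6 * (p * 2^(j+1))) := lemA β δ _ hβ
    calc volume (X j) * volume (Y j)
        ≤ ENNReal.ofReal (6 * (2:ℝ)^(-(j:ℤ))) * ENNReal.ofReal (6 * (p * 2^(j+1))) :=
          mul_le_mul' h1 h2
      _ = ENNReal.ofReal (6 * (2:ℝ)^(-(j:ℤ)) * (6 * (p * 2^(j+1)))) :=
          (ENNReal.ofReal_mul (by positivity)).symm
      _ = ENNReal.ofReal (72 * p) := by
          congr 1
          have hz : (2:ℝ)^(-(j:ℤ)) * (2:ℝ)^((j:ℕ)+1) = 2 := by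
            rw [← zpow_natCast (2:ℝ) (j+1), ← zpow_add₀ (by norm_num : (2:ℝ) ≠ 0)]
            have hexp : -(j:ℤ) + ((j+1:ℕ):ℤ) = 1 := by push_cast; ring
            rw [hexp, zpow_one]
          nlinarith [hz]
  have hXLb : volume (XL ×ˢ Icc (0:ℝ) 1) ≤ ENNReal.ofReal (3 * p) := by
    rw [Measure.volume_eq_prod, Measure.prod_prod]
    have h1 : volume XL ≤ ENNReal.ofReal (6 * (2:ℝ)^(-((J:ℤ)+1))) := lemA α γ _ hα
    calc volume XL * volume (Icc (0:ℝ) 1)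
        ≤ ENNReal.ofReal (6 * (2:ℝ)^(-((J:ℤ)+1))) * 1 := by
          apply mul_le_mul' h1
          simp [Real.volume_Icc]
      _ = ENNReal.ofReal (6 * (2:ℝ)^(-((J:ℤ)+1))) := mul_one _
      _ ≤ ENNReal.ofReal (3 * p) := by
          apply ENNReal.ofReal_le_ofReal
          have hs : (0:ℝ) < (2:ℝ)^(J:ℕ) := by positivity
          have ht : (0:ℝ) < (2:ℝ)^(-((J:ℤ)+1)) := by positivity
          have hone : 1 ≤ p * (2:ℝ)^(J:ℕ) := by
            rw [div_le_iff₀ hp0] at hF1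
            linarith
          have h2J : (2:ℝ)^(-((J:ℤ)+1)) * (2 * (2:ℝ)^(J:ℕ)) = 1 := by
            rw [show (2 * (2:ℝ)^(J:ℕ)) = (2:ℝ)^((J+1:ℕ)) by ring]
            rw [← zpow_natCast (2:ℝ) (J+1), ← zpow_add₀ (by norm_num : (2:ℝ) ≠ 0)]
            have hexp : -((J:ℤ)+1) + ((J+1:ℕ):ℤ) = 0 := by push_cast; ring
            rw [hexp, zpow_zero]
          nlinarith [h2J, hs, ht, hone, mul_pos hp0 hs]
  calc volume {q : ℝ × ℝ | q.1 ∈ Icc (0:ℝ) 1 ∧ q.2 ∈ Icc (0:ℝ) 1 ∧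
        nint (α * q.1 + γ) * nint (β * q.2 + δ) < p}
      ≤ volume ((⋃ j ∈ Finset.range (J+1), X j ×ˢ Y j) ∪ XL ×ˢ (Icc (0:ℝ) 1)) :=
        measure_mono hsub
    _ ≤ volume (⋃ j ∈ Finset.range (J+1), X j ×ˢ Y j) + volume (XL ×ˢ (Icc (0:ℝ) 1)) :=
        measure_union_le _ _
    _ ≤ (∑ j ∈ Finset.range (J+1), volume (X j ×ˢ Y j)) + ENNReal.ofReal (3 * p) :=
        add_le_add (measure_biUnion_finset_le _ _) hXLb
    _ ≤ (∑ _j ∈ Finset.range (J+1), ENNReal.ofReal (72 * p)) + ENNReal.ofReal (3 * p) :=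
        add_le_add (Finset.sum_le_sum fun j _ => hXj j) le_rfl
    _ = ((J+1 : ℕ) : ℝ≥0∞) * ENNReal.ofReal (72 * p) + ENNReal.ofReal (3 * p) := by
        rw [Finset.sum_const, Finset.card_range, nsmul_eq_mul]
    _ ≤ ENNReal.ofReal (400 * (p * clog (1/p))) := by
        rw [← ENNReal.ofReal_natCast, ← ENNReal.ofReal_mul (by positivity),
          ← ENNReal.ofReal_add (by positivity) (by positivity)]
        apply ENNReal.ofReal_le_ofReal
        push_cast
        nlinarith [hF2, hclog, hp0.le]

theorem stmt14 (a b c d : ℕ → ℝ) (ψ : ℕ → ℝ)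
    (ha : ∀ n, 1 ≤ a n) (hab : ∀ n, a n ≤ b n) (hψ : ∀ n, 0 ≤ ψ n)
    (hsum : Summable (fun n => ψ n * clog (1 / ψ n))) :
    volume {p : ℝ × ℝ | p.1 ∈ Icc (0:ℝ) 1 ∧ p.2 ∈ Icc (0:ℝ) 1 ∧
      {n : ℕ | nint (a n * p.1 + c n) * nint (b n * p.2 + d n) < ψ n}.Infinite} = 0 := by
  set s : ℕ → Set (ℝ × ℝ) := fun n => {p : ℝ × ℝ | p.1 ∈ Icc (0:ℝ) 1 ∧ p.2 ∈ Icc (0:ℝ) 1 ∧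
    nint (a n * p.1 + c n) * nint (b n * p.2 + d n) < ψ n} with hs
  have hbn : ∀ n, 1 ≤ b n := fun n => le_trans (ha n) (hab n)
  have hbound : ∀ n, volume (s n) ≤ ENNReal.ofReal (400 * (ψ n * clog (1 / ψ n))) :=
    fun n => lemB (a n) (b n) (c n) (d n) (ψ n) (ha n) (hbn n) (hψ n)
  have hnonneg : ∀ n, 0 ≤ 400 * (ψ n * clog (1 / ψ n)) := fun n =>
    mul_nonneg (by norm_num) (mul_nonneg (hψ n) (le_trans zero_le_one (one_le_clog _)))
  have hsum400 : Summable (fun n => 400 * (ψ n * clog (1 / ψ n))) := hsum.mul_left 400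
  have htsum : ∑' n, volume (s n) ≠ ⊤ := by
    apply ne_top_of_le_ne_top _ (ENNReal.tsum_le_tsum hbound)
    rw [← ENNReal.ofReal_tsum_of_nonneg hnonneg hsum400]
    exact ENNReal.ofReal_ne_top
  have hlim : volume (Filter.limsup s Filter.atTop) = 0 :=
    measure_limsup_atTop_eq_zero htsum
  refine measure_mono_null ?_ hlim
  rintro p ⟨hp1, hp2, hinf⟩
  rw [Filter.mem_limsup_iff_frequently_mem, Nat.frequently_atTop_iff_infinite]
  exact hinf.mono (fun n hn => ⟨hp1, hp2, hn⟩)
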